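/- Let 1 ≤ p < ∞ and let a countable discrete group Γ act on a compact metrizable abelian group X by continuous automorphisms. If the action is p-expansive, then the group Δ^p(X) of p-homoclinic points is countable. -/

import Mathlib

/-!
STATEMENT 6: If an action of a countable group `Γ` on a compact metrizable abelian group
`X` by continuous automorphisms is `p`-expansive (`1 ≤ p < ∞`), then the group `Δ^p(X)`
of `p`-homoclinic points is countable.
-/

open scoped ENNReal

namespace Stmt6

/-- A (continuous) character of a compact abelian group `X`, valued in the unit circle
`𝕋 ⊆ ℂ`. -/
def IsCharacter {X : Type*} [AddCommGroup X] [TopologicalSpace X] (φ : X → ℂ) : Prop :=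
  Continuous φ ∧ (∀ x y : X, φ (x + y) = φ x * φ y) ∧ ∀ x : X, ‖φ x‖ = 1

end Stmt6

open MeasureTheory in
open Stmt6 in
theorem stmt6 {Γ : Type*} [Group Γ] [Countable Γ]
    {X : Type*} [AddCommGroup X] [TopologicalSpace X] [IsTopologicalAddGroup X]
    [CompactSpace X] [TopologicalSpace.MetrizableSpace X]
    [DistribMulAction Γ X] (hcont : ∀ s : Γ, Continuous fun x : X => s • x)
    (p : ℝ) (hp : 1 ≤ p)
    -- `p`-expansiveness: there are a finite set `W` of characters and `ε > 0` such that
    -- the only `x ∈ X` with `∑_{φ ∈ W} ‖Ψ_{x,φ}‖_p < ε` is `x = 0`.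
    (hexp : ∃ W : Finset (X → ℂ), (∀ φ ∈ W, IsCharacter φ) ∧
      ∃ ε : ℝ, 0 < ε ∧ ∀ x : X,
        (∑ φ ∈ W, (∑' s : Γ, (‖φ (s • x) - 1‖₊ : ℝ≥0∞) ^ p) ^ (1 / p))
          < ENNReal.ofReal ε → x = 0) :
    -- `Δ^p(X)` is countable
    Set.Countable {x : X | ∀ φ : X → ℂ, IsCharacter φ →
      Summable fun s : Γ => ‖φ (s • x) - 1‖ ^ p} := by
  obtain ⟨W, hW, ε, hε, hsep⟩ := hexp
  have hεpos : (0 : ℝ≥0∞) < ENNReal.ofReal ε := ENNReal.ofReal_pos.2 hε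
  rcases Finset.eq_empty_or_nonempty W with hWe | hWne
  · have hall : ∀ x : X, x = 0 := fun x => hsep x (by simp [hWe, hεpos])
    exact Set.Countable.mono (fun x _ => hall x) (Set.countable_singleton 0)
  set S := {x : X | ∀ φ : X → ℂ, IsCharacter φ →
      Summable fun s : Γ => ‖φ (s • x) - 1‖ ^ p} with hS
  letI : MeasurableSpace Γ := ⊤
  haveI : SFinite (Measure.count : Measure Γ) := by rw [Measure.count]; infer_instance
  have hp0 : (0 : ℝ) < p := lt_of_lt_of_le one_pos hp
  set p' : ℝ≥0∞ := ENNReal.ofReal p with hp'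
  haveI : Fact (1 ≤ p') := ⟨by
    rw [hp', ← ENNReal.ofReal_one]; exact ENNReal.ofReal_le_ofReal hp⟩
  haveI : Fact (p' ≠ ∞) := ⟨ENNReal.ofReal_ne_top⟩
  have hptR : p'.toReal = p := ENNReal.toReal_ofReal hp0.le
  have hp'0 : p' ≠ 0 := by
    rw [hp', Ne, ENNReal.ofReal_eq_zero, not_le]; exact hp0
  have hmeas : ∀ f : Γ → ℝ≥0∞, Measurable f := fun f _ _ =>
    MeasurableSpace.measurableSet_top
  have hmeasC : ∀ f : Γ → ℂ, Measurable f := fun f _ _ =>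
    MeasurableSpace.measurableSet_top
  -- eLpNorm formula
  have key : ∀ f : Γ → ℂ, eLpNorm f p' (Measure.count : Measure Γ)
      = (∑' s : Γ, (‖f s‖₊ : ℝ≥0∞) ^ p) ^ (1 / p) := by
    intro f
    rw [eLpNorm_eq_lintegral_rpow_enorm_toReal hp'0 (Fact.out : p' ≠ ∞), hptR,
      lintegral_count' (hmeas _)]
    rfl
  -- membership
  have hmem : ∀ x ∈ S, ∀ φ ∈ W,
      MemLp (fun s : Γ => φ (s • x) - 1) p' (Measure.count : Measure Γ) := by
    intro x hx φ hφ
    refine ⟨(hmeasC _).aestronglyMeasurable, ?_⟩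
    rw [key]
    have hsum : Summable (fun s : Γ => ‖φ (s • x) - 1‖ ^ p) := hx φ (hW φ hφ)
    have hfin : (∑' s : Γ, (‖φ (s • x) - 1‖₊ : ℝ≥0∞) ^ p) ≠ ∞ := by
      have heq : ∀ s : Γ, (‖φ (s • x) - 1‖₊ : ℝ≥0∞) ^ p
          = ENNReal.ofReal (‖φ (s • x) - 1‖ ^ p) := by
        intro s
        rw [← enorm_eq_nnnorm, ← ofReal_norm,
          ← ENNReal.ofReal_rpow_of_nonneg (norm_nonneg _) hp0.le]
      rw [tsum_congr heq, ← ENNReal.ofReal_tsum_of_nonneg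
        (fun s => by positivity) hsum]
      exact ENNReal.ofReal_ne_top
    exact ENNReal.rpow_lt_top_of_nonneg (by positivity) hfin
  -- norm identity for differences
  have hnn : ∀ φ ∈ W, ∀ (x y : X) (s : Γ),
      ‖(φ (s • x) - 1) - (φ (s • y) - 1)‖₊ = ‖φ (s • (x - y)) - 1‖₊ := by
    intro φ hφ x y s
    obtain ⟨-, hmul, hnorm⟩ := hW φ hφ
    have h1 : φ (s • x) = φ (s • (x - y)) * φ (s • y) := by
      rw [← hmul]; congr 1
      rw [← smul_add, sub_add_cancel]
    ext
    push_cast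
    calc ‖(φ (s • x) - 1) - (φ (s • y) - 1)‖
        = ‖(φ (s • (x - y)) - 1) * φ (s • y)‖ := by rw [h1]; ring_nf
      _ = ‖φ (s • (x - y)) - 1‖ := by rw [norm_mul, hnorm, mul_one]
  -- the separation constant
  set η : ℝ≥0∞ := ENNReal.ofReal ε / W.card with hη
  have hcard0 : (W.card : ℝ≥0∞) ≠ 0 := by
    simpa using hWne.card_pos.ne'
  have hηpos : 0 < η := ENNReal.div_pos hεpos.ne' (by simp)
  have hηtop : η ≠ ∞ := by
    rw [hη]; exact (ENNReal.div_lt_top ENNReal.ofReal_ne_top hcard0).ne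
  have hrpos : 0 < η.toReal := ENNReal.toReal_pos hηpos.ne' hηtop
  -- the embedding
  set G : S → ({φ // φ ∈ W} → Lp ℂ p' (Measure.count : Measure Γ)) :=
    fun x φ => MemLp.toLp _ (hmem x.1 x.2 φ.1 φ.2) with hG
  -- separation
  have sep : ∀ x y : S, x ≠ y → η.toReal ≤ dist (G x) (G y) := by
    intro x y hxy
    have hz : x.1 - y.1 ≠ 0 := sub_ne_zero.2 (fun h => hxy (Subtype.ext h))
    have hge : ENNReal.ofReal ε ≤
        ∑ φ ∈ W, (∑' s : Γ, (‖φ (s • (x.1 - y.1)) - 1‖₊ : ℝ≥0∞) ^ p) ^ (1 / p) := by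
      by_contra h
      exact hz (hsep _ (lt_of_not_ge h))
    -- pick maximizing φ
    obtain ⟨φ₀, hφ₀W, hφ₀max⟩ := W.exists_max_image
      (fun φ => (∑' s : Γ, (‖φ (s • (x.1 - y.1)) - 1‖₊ : ℝ≥0∞) ^ p) ^ (1 / p)) hWne
    have hsum_le : (∑ φ ∈ W, (∑' s : Γ, (‖φ (s • (x.1 - y.1)) - 1‖₊ : ℝ≥0∞) ^ p) ^ (1 / p))
        ≤ W.card • ((∑' s : Γ, (‖φ₀ (s • (x.1 - y.1)) - 1‖₊ : ℝ≥0∞) ^ p) ^ (1 / p)) :=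
      Finset.sum_le_card_nsmul _ _ _ (fun φ hφ => hφ₀max φ hφ)
    have hterm : η ≤ (∑' s : Γ, (‖φ₀ (s • (x.1 - y.1)) - 1‖₊ : ℝ≥0∞) ^ p) ^ (1 / p) := by
      rw [hη, ENNReal.div_le_iff hcard0 (by simp)]
      calc ENNReal.ofReal ε ≤ _ := hge.trans hsum_le
        _ = _ := by rw [nsmul_eq_mul, mul_comm]
    -- relate to dist
    set f : Γ → ℂ := fun s => φ₀ (s • x.1) - 1 with hf
    set g : Γ → ℂ := fun s => φ₀ (s • y.1) - 1 with hg'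
    have hfg : eLpNorm (f - g) p' (Measure.count : Measure Γ)
        = (∑' s : Γ, (‖φ₀ (s • (x.1 - y.1)) - 1‖₊ : ℝ≥0∞) ^ p) ^ (1 / p) := by
      rw [key]
      congr 1
      refine tsum_congr fun s => ?_
      rw [Pi.sub_apply, hnn φ₀ hφ₀W x.1 y.1 s]
    have hdist : dist (G x ⟨φ₀, hφ₀W⟩) (G y ⟨φ₀, hφ₀W⟩)
        = (eLpNorm (f - g) p' (Measure.count : Measure Γ)).toReal := by
      rw [hG]
      simp only [dist_eq_norm]
      rw [← MemLp.toLp_sub, Lp.norm_toLp]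
    have hfin : eLpNorm (f - g) p' (Measure.count : Measure Γ) ≠ ∞ :=
      ((hmem x.1 x.2 φ₀ hφ₀W).sub (hmem y.1 y.2 φ₀ hφ₀W)).2.ne
    calc η.toReal ≤ (eLpNorm (f - g) p' (Measure.count : Measure Γ)).toReal := by
          apply ENNReal.toReal_mono hfin
          rw [hfg]; exact hterm
      _ = dist (G x ⟨φ₀, hφ₀W⟩) (G y ⟨φ₀, hφ₀W⟩) := hdist.symm
      _ ≤ dist (G x) (G y) := dist_le_pi_dist _ _ _
  -- conclude countability
  haveI : TopologicalSpace.SeparableSpace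
      ({φ // φ ∈ W} → Lp ℂ p' (Measure.count : Measure Γ)) := inferInstance
  have hd : Pairwise (Function.onFun Disjoint fun x : S => Metric.ball (G x) (η.toReal / 2)) := by
    intro x y hxy
    apply Metric.ball_disjoint_ball
    rw [add_halves]
    exact sep x y hxy
  have : Countable ↥S := hd.countable_of_isOpen_disjoint
    (fun i => Metric.isOpen_ball) (fun i => Metric.nonempty_ball.2 (by positivity))
  exact Set.countable_coe_iff.mp this
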